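/- For the mixed hypergraph H*_{n_1,...,n_s} of Construction I with 2 ≤ n_s < ... < n_1, and for each i ∈ [s], the coloring c_i^{s*} assigning to each vertex its i-th coordinate is a strict n_i-coloring of H*_{n_1,...,n_s}. -/

import Mathlib

/-- A mixed hypergraph on vertex type `V`: families of C-edges and D-edges. -/
structure MixedHypergraph (V : Type*) where
  Cedges : Set (Set V)
  Dedges : Set (Set V)

/-- A strict `k`-coloring: a surjective coloring with `k` colors such that every
C-edge has two distinct vertices with a common color and every D-edge has two
distinct vertices with distinct colors. -/
def IsStrictColoring {V : Type*} (H : MixedHypergraph V) (k : ℕ) (f : V → Fin k) : Prop :=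
  Function.Surjective f ∧
  (∀ e ∈ H.Cedges, ∃ u ∈ e, ∃ v ∈ e, u ≠ v ∧ f u = f v) ∧
  (∀ e ∈ H.Dedges, ∃ u ∈ e, ∃ v ∈ e, u ≠ v ∧ f u ≠ f v)

/-- The feasible set of a mixed hypergraph. -/
def FeasibleSet {V : Type*} (H : MixedHypergraph V) : Set ℕ :=
  {k | ∃ f : V → Fin k, IsStrictColoring H k f}

/-- Two colorings induce the same partition of the vertex set. -/
def SamePartition {V : Type*} {k k' : ℕ} (f : V → Fin k) (g : V → Fin k') : Prop :=
  ∀ u v, f u = f v ↔ g u = g v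

/-- `H` is a one-realization of `S`: its feasible set is `S` and for each `k`
the partition induced by a strict `k`-coloring is unique. -/
def IsOneRealization {V : Type*} (H : MixedHypergraph V) (S : Set ℕ) : Prop :=
  FeasibleSet H = S ∧
  ∀ (k : ℕ) (f g : V → Fin k), IsStrictColoring H k f → IsStrictColoring H k g →
    SamePartition f g

/-- Vertex set of Construction I: `X* ⊆ [n₁] × ⋯ × [n_s]` consists of the diagonal
vertices `(i,…,i)` for `i ∈ [n_s - 1]`; for each `2 ≤ t ≤ s` and `n_t ≤ j ≤ n_{t-1}-1`
the vertices `(j,…,j,n_t,…,n_s)` and `(j,…,j,1,…,1)` (`j` repeated `t-1` times);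
and `(n₁,…,n_s)`.  (Index `t` of the paper corresponds to `t.val + 1` here.) -/
def XstarGen (s : ℕ) (n : Fin s → ℕ) : Set (Fin s → ℕ) :=
  {x | (∃ last : Fin s, (last : ℕ) + 1 = s ∧ ∃ i, 1 ≤ i ∧ i + 1 ≤ n last ∧ ∀ k, x k = i) ∨
       (∃ t u : Fin s, (u : ℕ) + 1 = (t : ℕ) ∧ ∃ j, n t ≤ j ∧ j + 1 ≤ n u ∧
         ((∀ k : Fin s, ((k : ℕ) < (t : ℕ) → x k = j) ∧ ((t : ℕ) ≤ (k : ℕ) → x k = n k)) ∨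
          (∀ k : Fin s, ((k : ℕ) < (t : ℕ) → x k = j) ∧ ((t : ℕ) ≤ (k : ℕ) → x k = 1)))) ∨
       (∀ k, x k = n k)}

/-- The Construction-I mixed hypergraph on a vertex set `X` of `s`-tuples:
D-edges are pairs of vertices differing in every coordinate, and C-edges are
triples of distinct vertices such that every coordinate takes exactly two
distinct values among the three. -/
def HstarOn {s : ℕ} (X : Set (Fin s → ℕ)) : MixedHypergraph X where
  Cedges := {e | ∃ u v w : X, u ≠ v ∧ u ≠ w ∧ v ≠ w ∧ e = {u, v, w} ∧
    ∀ k : Fin s, ({(u : Fin s → ℕ) k, (v : Fin s → ℕ) k, (w : Fin s → ℕ) k} : Finset ℕ).card = 2}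
  Dedges := {e | ∃ u v : X, e = {u, v} ∧ ∀ k : Fin s, (u : Fin s → ℕ) k ≠ (v : Fin s → ℕ) k}

/-- for each `i`, the coloring of `H*_{n₁,…,n_s}` assigning to each
vertex its `i`-th coordinate is a strict `n_i`-coloring (colors `[n_i]` are
identified with `Fin (n i)` via `c ↦ c + 1`). -/
theorem coordinate_coloring_strict (s : ℕ) (hs : 0 < s) (n : Fin s → ℕ)
    (hanti : StrictAnti n) (h2 : 2 ≤ n ⟨s - 1, by omega⟩) (i : Fin s) :
    ∃ f : XstarGen s n → Fin (n i),
      IsStrictColoring (HstarOn (XstarGen s n)) (n i) f ∧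
      ∀ x : XstarGen s n, ((f x : ℕ) + 1 = (x : Fin s → ℕ) i) :=
  by
  classical
  have hlastlt : s - 1 < s := by omega
  set last : Fin s := ⟨s - 1, hlastlt⟩ with hlastdef
  have hmono : ∀ k : Fin s, n last ≤ n k := by
    intro k
    apply hanti.antitone
    rw [Fin.le_def]
    have := k.isLt
    simp [hlastdef]
    omega
  have h2' : 2 ≤ n last := h2
  -- range of coordinates
  have hrange : ∀ x ∈ XstarGen s n, 1 ≤ x i ∧ x i ≤ n i := by
    intro x hx
    rcases hx with ⟨l, hl, j, hj1, hj2, hall⟩ | ⟨t, u, hut, j, hj1, hj2, hx⟩ | hx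
    · have hl' : l = last := Fin.ext (by simp [hlastdef]; omega)
      have hj2' : j + 1 ≤ n last := by rw [← hl']; exact hj2
      rw [hall i]
      have := hmono i
      omega
    · have hui : (i : ℕ) < (t : ℕ) ∨ (t : ℕ) ≤ (i : ℕ) := by omega
      rcases hx with h | h
      · rcases hui with hi | hi
        · rw [(h i).1 hi]
          have h1 : n u ≤ n i := hanti.antitone (Fin.le_def.mpr (by omega))
          have h3 := hmono t
          omega
        · rw [(h i).2 hi]
          have := hmono i
          omega
      · rcases hui with hi | hi
        · rw [(h i).1 hi]
          have h1 : n u ≤ n i := hanti.antitone (Fin.le_def.mpr (by omega))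
          have h3 := hmono t
          omega
        · rw [(h i).2 hi]
          have := hmono i
          omega
    · rw [hx i]
      have := hmono i
      omega
  have hwf : ∀ x : XstarGen s n, (x : Fin s → ℕ) i - 1 < n i := fun x => by
    have := hrange x x.2; omega
  refine ⟨fun x => ⟨(x : Fin s → ℕ) i - 1, hwf x⟩, ⟨?_, ?_, ?_⟩, ?_⟩
  · -- surjectivity
    intro c
    have hc := c.isLt
    set v : ℕ := (c : ℕ) + 1 with hv
    have hv1 : 1 ≤ v := by omega
    have hvn : v ≤ n i := by omega
    rcases eq_or_lt_of_le hvn with heq | hlt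
    · refine ⟨⟨n, Or.inr (Or.inr fun k => rfl)⟩, ?_⟩
      apply Fin.ext
      simp
      omega
    · rcases le_or_gt (n last) v with hge | hsmall
      · -- middle case: find minimal t0 with n t0 ≤ v
        have hne : (Finset.univ.filter (fun t : Fin s => n t ≤ v)).Nonempty :=
          ⟨last, by simp [hge]⟩
        set t0 := Finset.min' _ hne with ht0def
        have ht0 : n t0 ≤ v := by
          have := Finset.min'_mem _ hne
          simpa using this
        have hminle : ∀ t : Fin s, n t ≤ v → t0 ≤ t := by
          intro t ht
          exact Finset.min'_le _ _ (by simp [ht])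
        have hit0 : (i : ℕ) < (t0 : ℕ) := by
          by_contra hcon
          push_neg at hcon
          have : n i ≤ n t0 := hanti.antitone (Fin.le_def.mpr hcon)
          omega
        have ht0pos : 1 ≤ (t0 : ℕ) := by omega
        have ht0lt := t0.isLt
        set u : Fin s := ⟨(t0 : ℕ) - 1, by omega⟩ with hudef
        have hulv : v < n u := by
          by_contra hcon
          push_neg at hcon
          have := hminle u hcon
          rw [Fin.le_def] at this
          simp [hudef] at this
          omega
        set x : Fin s → ℕ := fun k => if (k : ℕ) < (t0 : ℕ) then v else 1 with hxdef
        have hxmem : x ∈ XstarGen s n :=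
          Or.inr (Or.inl ⟨t0, u, by simp [hudef]; omega, v, ht0, by omega, Or.inr
            fun k => ⟨fun hk => if_pos hk, fun hk => if_neg (by omega)⟩⟩)
        refine ⟨⟨x, hxmem⟩, ?_⟩
        apply Fin.ext
        show (if (i : ℕ) < (t0 : ℕ) then v else 1) - 1 = (c : ℕ)
        rw [if_pos hit0]
        omega
      · -- diagonal case
        have hxmem : (fun _ : Fin s => v) ∈ XstarGen s n :=
          Or.inl ⟨last, by simp [hlastdef]; omega, v, hv1, by omega, fun k => rfl⟩
        refine ⟨⟨_, hxmem⟩, ?_⟩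
        apply Fin.ext
        simp
        omega
  · -- C-edges
    intro e he
    obtain ⟨a, b, cc, hab, hac, hbc, he', hcard⟩ := he
    have key : (a : Fin s → ℕ) i = (b : Fin s → ℕ) i ∨
        (a : Fin s → ℕ) i = (cc : Fin s → ℕ) i ∨
        (b : Fin s → ℕ) i = (cc : Fin s → ℕ) i := by
      by_contra hcon
      push_neg at hcon
      have hci := hcard i
      rw [Finset.card_insert_of_notMem (by simp [hcon.1, hcon.2.1]),
          Finset.card_insert_of_notMem (by simp [hcon.2.2])] at hci
      simp at hci
    rcases key with h | h | h
    · exact ⟨a, by rw [he']; simp, b, by rw [he']; simp, hab, Fin.ext (by simp [h])⟩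
    · exact ⟨a, by rw [he']; simp, cc, by rw [he']; simp, hac, Fin.ext (by simp [h])⟩
    · exact ⟨b, by rw [he']; simp, cc, by rw [he']; simp, hbc, Fin.ext (by simp [h])⟩
  · -- D-edges
    intro e he
    obtain ⟨a, b, he', hne⟩ := he
    have ha := hrange a a.2
    have hb := hrange b b.2
    refine ⟨a, by rw [he']; simp, b, by rw [he']; simp, ?_, ?_⟩
    · intro h
      exact hne i (by rw [h])
    · intro h
      have := congrArg Fin.val h
      simp at this
      exact hne i (by omega)
  · intro x
    have := hrange x x.2
    simp
    omega
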